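/- For odd n and p in [1/2, 1], the function P(n,p) = ∑_{i=⌈n/2⌉}^{n} C(n,i) p^i (1−p)^{n−i} is monotonically increasing in p on [1/2,1]. -/

import Mathlib

noncomputable def Pmaj (n : ℕ) (p : ℝ) : ℝ :=
  ∑ i ∈ Finset.Ioc (n / 2) n, (n.choose i : ℝ) * p ^ i * (1 - p) ^ (n - i)

lemma telescope_Ioc (f : ℕ → ℝ) (m : ℕ) :
    ∀ n, m ≤ n → ∑ i ∈ Finset.Ioc m n, (f (i - 1) - f i) = f m - f n := by
  intro n
  induction n with
  | zero => intro h; interval_cases m; simp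
  | succ k ih =>
    intro h
    rcases Nat.lt_or_ge m (k+1) with hm | hm
    · have hmk : m ≤ k := Nat.lt_succ_iff.mp hm
      rw [Finset.sum_Ioc_succ_top hmk, ih hmk,
        show k + 1 - 1 = k from by omega]
      ring
    · have : m = k + 1 := le_antisymm h hm
      subst this; simp

noncomputable def gaux (n : ℕ) (p : ℝ) (j : ℕ) : ℝ :=
  ((n - 1).choose j : ℝ) * p ^ j * (1 - p) ^ (n - 1 - j)

lemma hasDerivAt_Pmaj (n : ℕ) (hn : 1 ≤ n) (p : ℝ) :
    HasDerivAt (fun p => Pmaj n p)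
      ((n : ℝ) * (gaux n p (n / 2) - gaux n p n)) p := by
  have key : ∀ i ∈ Finset.Ioc (n / 2) n,
      HasDerivAt (fun q : ℝ => (n.choose i : ℝ) * q ^ i * (1 - q) ^ (n - i))
        ((n : ℝ) * (gaux n p (i - 1) - gaux n p i)) p := by
    intro i hi
    simp only [Finset.mem_Ioc] at hi
    have hi1 : 1 ≤ i := le_trans (Nat.succ_le_succ (Nat.zero_le _)) hi.1
    have A : HasDerivAt (fun q : ℝ => q ^ i) ((i : ℝ) * p ^ (i - 1)) p :=
      hasDerivAt_pow i p
    have B : HasDerivAt (fun q : ℝ => (1 - q) ^ (n - i))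
        (((n - i : ℕ) : ℝ) * (1 - p) ^ (n - i - 1) * (-1)) p := by
      have := ((hasDerivAt_id p).const_sub (1:ℝ)).fun_pow (n - i)
      simpa using this
    have C := ((A.const_mul (n.choose i : ℝ)).mul B)
    refine C.congr_deriv (Eq.symm ?_)
    -- value equality
    have e1 : ((n : ℝ)) * ((n - 1).choose (i - 1) : ℝ) = (n.choose i : ℝ) * (i : ℝ) := by
      have hn' : n - 1 + 1 = n := by omega
      have hi' : i - 1 + 1 = i := by omega
      have := Nat.add_one_mul_choose_eq (n - 1) (i - 1)
      simp only [Nat.succ_eq_add_one, hn', hi'] at this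
      exact_mod_cast this
    have e2 : ((n : ℝ)) * ((n - 1).choose i : ℝ) = (n.choose i : ℝ) * ((n - i : ℕ) : ℝ) := by
      have hn' : n - 1 + 1 = n := by omega
      have := Nat.choose_mul_succ_eq (n - 1) i
      simp only [hn'] at this
      have : ((n-1).choose i : ℝ) * (n : ℝ) = (n.choose i : ℝ) * ((n - i : ℕ) : ℝ) := by
        exact_mod_cast this
      linarith [this]
    have e3 : n - i = n - 1 - (i - 1) := by omega
    have e4 : n - i - 1 = n - 1 - i := by omega
    simp only [gaux, ← e3, ← e4]
    rw [mul_sub]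
    rw [show (n:ℝ) * (((n - 1).choose (i-1) : ℝ) * p ^ (i-1) * (1 - p) ^ (n - i)) =
      ((n:ℝ) * ((n - 1).choose (i-1) : ℝ)) * p ^ (i-1) * (1 - p) ^ (n - i) by ring,
      show (n:ℝ) * (((n - 1).choose i : ℝ) * p ^ i * (1 - p) ^ (n - i - 1)) =
      ((n:ℝ) * ((n - 1).choose i : ℝ)) * p ^ i * (1 - p) ^ (n - i - 1) by ring,
      e1, e2]
    ring
  have := HasDerivAt.fun_sum key
  unfold Pmaj
  refine this.congr_deriv (Eq.symm ?_)
  rw [← Finset.mul_sum, telescope_Ioc _ _ _ (Nat.div_le_self n 2)]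

theorem Pmaj_monotoneOn (n : ℕ) (hn : Odd n) :
    MonotoneOn (fun p => Pmaj n p) (Set.Icc (1 / 2 : ℝ) 1) := by
  have hn1 : 1 ≤ n := hn.pos
  have hder : ∀ p : ℝ, HasDerivAt (fun p => Pmaj n p)
      ((n : ℝ) * gaux n p (n / 2)) p := by
    intro p
    have h0 : gaux n p n = 0 := by
      simp [gaux, Nat.choose_eq_zero_of_lt (by omega : n - 1 < n)]
    have := hasDerivAt_Pmaj n hn1 p
    rw [h0, sub_zero] at this
    exact this
  apply monotoneOn_of_deriv_nonneg (convex_Icc _ _)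
  · exact Continuous.continuousOn (by
      have : Continuous fun p => Pmaj n p := by
        unfold Pmaj
        exact continuous_finset_sum _ fun i _ => by continuity
      exact this)
  · intro x hx
    exact (hder x).differentiableAt.differentiableWithinAt
  · intro x hx
    rw [interior_Icc, Set.mem_Ioo] at hx
    rw [(hder x).deriv]
    have hp : (0:ℝ) ≤ x := by linarith
    have hp1 : (0:ℝ) ≤ 1 - x := by linarith
    unfold gaux
    positivity
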